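/- arXiv:1705.11019 — 3 statements merged into one kernel-verified Lean document; each statement's English description precedes it below -/
import Mathlib

section
/- Let (J, N, ♯, T, 1) be a cubic norm structure over K, let σ be a ring automorphism of K, let φ be a σ-semilinear autotopy of J, and let δ := N(φ(1)). Then for all a, b ∈ J: N(φ(a)) = δ·σ(N(a)) and σ(T(φ̌(a), b)) = T(a, φ(b)). -/
/-- A cubic norm structure over a commutative ring `K`. -/
structure CubicNormStructure (K : Type*) [CommRing K]
    (J : Type*) [AddCommGroup J] [Module K J] where
  N : J → K
  sharp : J → J
  T : J → J → K
  one : J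
  one_ne_zero : one ≠ 0
  T_add_left : ∀ a b c : J, T (a + b) c = T a c + T b c
  T_smul_left : ∀ (t : K) (a b : J), T (t • a) b = t * T a b
  T_symm : ∀ a b : J, T a b = T b a
  sharp_smul : ∀ (t : K) (a : J), sharp (t • a) = t ^ 2 • sharp a
  N_smul : ∀ (t : K) (a : J), N (t • a) = t ^ 3 * N a
  N_add : ∀ a b : J, N (a + b) = N a + T b (sharp a) + T a (sharp b) + N b
  sharp_sharp : ∀ a : J, sharp (sharp a) = N a • a
  sharp_one : sharp one = one
  one_cross : ∀ b : J, b = T b one • one - (sharp (one + b) - sharp one - sharp b)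

namespace CubicNormStructure

variable {K : Type*} [CommRing K] {J : Type*} [AddCommGroup J] [Module K J]

/-- The linearization `a × b` of the adjoint map. -/
def cross (S : CubicNormStructure K J) (a b : J) : J :=
  S.sharp (a + b) - S.sharp a - S.sharp b

/-- The `U`-operator `U_a(b) = T(a,b)•a − a♯ × b`. -/
def U (S : CubicNormStructure K J) (a b : J) : J :=
  S.T a b • a - S.cross (S.sharp a) b

end CubicNormStructure

namespace CubicNormStructure

variable {K : Type*} [CommRing K] {J : Type*} [AddCommGroup J] [Module K J]
variable (S : CubicNormStructure K J)

lemma T_add_right (a b c : J) : S.T a (b + c) = S.T a b + S.T a c := by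
  rw [S.T_symm a (b + c), S.T_add_left, S.T_symm b a, S.T_symm c a]

lemma T_smul_right (t : K) (a b : J) : S.T a (t • b) = t * S.T a b := by
  rw [S.T_symm a (t • b), S.T_smul_left, S.T_symm b a]

lemma T_sub_right (a b c : J) : S.T a (b - c) = S.T a b - S.T a c := by
  rw [sub_eq_add_neg, S.T_add_right, ← neg_one_smul K c, S.T_smul_right]; ring

lemma cross_comm (a b : J) : S.cross a b = S.cross b a := by
  unfold cross; rw [add_comm]; abel

lemma sharp_add (a b : J) : S.sharp (a + b) = S.sharp a + S.sharp b + S.cross a b := by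
  unfold cross; abel

lemma cross_self (a : J) : S.cross a a = (2:K) • S.sharp a := by
  unfold cross
  rw [← two_smul K a, S.sharp_smul]
  module

lemma phi_cyclic (a b c : J) : S.T c (S.cross a b) = S.T a (S.cross b c) := by
  have h1 := S.N_add (a + b) c
  have h2 := S.N_add a (b + c)
  have h3 := S.N_add a b
  have h4 := S.N_add b c
  rw [add_assoc] at h1
  rw [S.sharp_add a b, S.T_add_right, S.T_add_right, S.T_add_left] at h1
  rw [S.sharp_add b c, S.T_add_right, S.T_add_right, S.T_add_left] at h2
  linear_combination h2 - h1 - h3 + h4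

lemma tc_swap (c a x : J) : S.T c (S.cross a x) = S.T x (S.cross c a) :=
  (S.phi_cyclic a x c).trans (S.phi_cyclic x c a)

lemma tc_add_right (c a x y : J) :
    S.T c (S.cross a (x + y)) = S.T c (S.cross a x) + S.T c (S.cross a y) := by
  rw [S.tc_swap c a (x + y), S.T_add_left, ← S.tc_swap c a x, ← S.tc_swap c a y]

lemma tc_smul_right (c a : J) (t : K) (x : J) :
    S.T c (S.cross a (t • x)) = t * S.T c (S.cross a x) := by
  rw [S.tc_swap c a (t • x), S.T_smul_left, ← S.tc_swap c a x]

lemma tc_sub_right (c a x y : J) :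
    S.T c (S.cross a (x - y)) = S.T c (S.cross a x) - S.T c (S.cross a y) := by
  rw [sub_eq_add_neg, S.tc_add_right, ← neg_one_smul K y, S.tc_smul_right]; ring

lemma tc_add_left (c a b x : J) :
    S.T c (S.cross (a + b) x) = S.T c (S.cross a x) + S.T c (S.cross b x) := by
  rw [S.cross_comm (a + b) x, S.tc_add_right, S.cross_comm x a, S.cross_comm x b]

lemma tc_smul_left (c : J) (t : K) (a x : J) :
    S.T c (S.cross (t • a) x) = t * S.T c (S.cross a x) := by
  rw [S.cross_comm (t • a) x, S.tc_smul_right, S.cross_comm x a]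

lemma tc_sharp (u x : J) : S.T u (S.cross x x) = 2 * S.T u (S.sharp x) := by
  rw [S.cross_self, S.T_smul_right]

lemma inner_smul_r (u X a : J) (t : K) (b : J) :
    S.T u (S.cross X (S.cross a (t • b))) = t * S.T u (S.cross X (S.cross a b)) := by
  rw [S.tc_swap u X (S.cross a (t • b)), S.T_symm (S.cross a (t • b)) (S.cross u X),
    S.tc_smul_right, S.T_symm (S.cross u X) (S.cross a b), ← S.tc_swap u X (S.cross a b)]

lemma inner_smul_l (u : J) (a : J) (t : K) (b Y : J) :
    S.T u (S.cross (S.cross a (t • b)) Y) = t * S.T u (S.cross (S.cross a b) Y) := by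
  rw [S.cross_comm (S.cross a (t • b)) Y, S.inner_smul_r, S.cross_comm Y (S.cross a b)]

lemma t_sharp_self (h2K : IsUnit (2:K)) (x : J) : S.T x (S.sharp x) = 3 * S.N x := by
  have h := S.N_add x x
  rw [← two_smul K x, S.N_smul] at h
  exact h2K.mul_left_cancel (by linear_combination -h)

lemma n_sharp (h2K : IsUnit (2:K)) (h3K : IsUnit (3:K)) (x : J) :
    S.N (S.sharp x) = S.N x ^ 2 := by
  have h := S.t_sharp_self h2K (S.sharp x)
  rw [S.sharp_sharp, S.T_smul_right, S.T_symm (S.sharp x) x, S.t_sharp_self h2K x] at h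
  exact h3K.mul_left_cancel (by linear_combination -h)

lemma t_decomp (a b : J) :
    S.T a b = S.T a S.one * S.T b S.one - S.T S.one (S.cross a b) := by
  have h : S.T a b = S.T a (S.T b S.one • S.one - S.cross S.one b) := by
    congr 1
    have := S.one_cross b
    rw [show S.sharp (S.one + b) - S.sharp S.one - S.sharp b = S.cross S.one b from rfl] at this
    exact this
  rw [h, S.T_sub_right, S.T_smul_right, S.phi_cyclic S.one b a, S.cross_comm b a]
  ring

lemma l1s (h2K : IsUnit (2:K)) (h3K : IsUnit (3:K)) (a b u : J) :
    S.T u (S.cross (S.sharp a) (S.cross a b)) =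
      S.N a * S.T b u + S.T b (S.sharp a) * S.T a u := by
  have dsq : ∀ x : J, S.T u (S.cross (S.sharp x) (S.sharp x)) = 2 * (S.N x * S.T x u) := by
    intro x
    rw [S.tc_sharp, S.sharp_sharp, S.T_smul_right, S.T_symm u x]
  have key : ∀ t : K,
      2*((S.N a + t * S.T b (S.sharp a) + t^2 * S.T a (S.sharp b) + t^3 * S.N b) *
          (S.T a u + t * S.T b u))
      = 2*(S.N a * S.T a u)
        + t*(2 * S.T u (S.cross (S.sharp a) (S.cross a b)))
        + t^2*(S.T u (S.cross (S.cross a b) (S.cross a b))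
            + 2 * S.T u (S.cross (S.sharp a) (S.sharp b)))
        + t^3*(2 * S.T u (S.cross (S.cross a b) (S.sharp b)))
        + t^4*(2*(S.N b * S.T b u)) := by
    intro t
    have hNx : S.N (a + t • b)
        = S.N a + t * S.T b (S.sharp a) + t^2 * S.T a (S.sharp b) + t^3 * S.N b := by
      rw [S.N_add, S.T_smul_left, S.sharp_smul, S.T_smul_right, S.N_smul]
    have hTx : S.T (a + t • b) u = S.T a u + t * S.T b u := by
      rw [S.T_add_left, S.T_smul_left]
    have hmain : 2*(S.N (a + t • b) * S.T (a + t • b) u)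
        = S.T u (S.cross (S.sharp (a + t • b)) (S.sharp (a + t • b))) := by
      rw [S.tc_sharp, S.sharp_sharp, S.T_smul_right, S.T_symm u (a + t • b)]
    have hsx : S.sharp (a + t • b)
        = S.sharp a + t^2 • S.sharp b + S.cross a (t • b) := by
      rw [S.sharp_add, S.sharp_smul]
    calc 2*((S.N a + t * S.T b (S.sharp a) + t^2 * S.T a (S.sharp b) + t^3 * S.N b) *
          (S.T a u + t * S.T b u))
        = 2*(S.N (a + t • b) * S.T (a + t • b) u) := by rw [hNx, hTx]
      _ = S.T u (S.cross (S.sharp (a + t • b)) (S.sharp (a + t • b))) := hmain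
      _ = _ := by
          rw [hsx]
          simp only [S.tc_add_left, S.tc_add_right, S.tc_smul_left, S.tc_smul_right,
            S.inner_smul_l, S.inner_smul_r]
          rw [S.cross_comm (S.sharp b) (S.sharp a),
            S.cross_comm (S.cross a b) (S.sharp a),
            S.cross_comm (S.sharp b) (S.cross a b)]
          rw [dsq a, dsq b]
          ring
  have k1 := key 1
  have km := key (-1)
  have k2 := key 2
  have e2 : S.T u (S.cross (S.cross a b) (S.cross a b))
      + 2 * S.T u (S.cross (S.sharp a) (S.sharp b))
      = 2*(S.T a (S.sharp b) * S.T a u + S.T b (S.sharp a) * S.T b u) := by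
    apply h2K.mul_left_cancel
    linear_combination -k1 - km
  have e13 : S.T u (S.cross (S.sharp a) (S.cross a b))
      + S.T u (S.cross (S.cross a b) (S.sharp b))
      = (S.T b (S.sharp a) * S.T a u + S.N a * S.T b u)
        + (S.N b * S.T a u + S.T a (S.sharp b) * S.T b u) := by
    apply h2K.mul_left_cancel
    apply h2K.mul_left_cancel
    linear_combination km - k1
  have e3 : S.T u (S.cross (S.cross a b) (S.sharp b))
      = S.N b * S.T a u + S.T a (S.sharp b) * S.T b u := by
    apply h3K.mul_left_cancel
    apply h2K.mul_left_cancel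
    apply h2K.mul_left_cancel
    linear_combination -k2 - 4*e2 - 4*e13
  linear_combination e13 - e3

end CubicNormStructure

/-- Proposition 2.5 (i), (ii): for a `σ`-semilinear autotopy `φ` with `δ = N(φ(1))`
and adjoint `φ̌ = φ⁻¹ ∘ U_{φ(1)}`, one has `N(φ(a)) = δ·σ(N(a))` and
`σ(T(φ̌(a), b)) = T(a, φ(b))`. -/
theorem stmt6 {F : Type*} [Field F] (h2 : (2 : F) ≠ 0) (h3 : (3 : F) ≠ 0)
    {K : Type*} [CommRing K] [Algebra F K]
    {J : Type*} [AddCommGroup J] [Module K J]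
    (S : CubicNormStructure K J)
    (σ : K ≃+* K) (φ : J → J)
    (hbij : Function.Bijective φ)
    (hadd : ∀ a b : J, φ (a + b) = φ a + φ b)
    (hsemi : ∀ (t : K) (a : J), φ (t • a) = σ t • φ a)
    (hinv : IsUnit (S.N (φ S.one)))
    (haut : ∀ a : J, φ (S.sharp a) =
      Ring.inverse (S.N (φ S.one)) • S.U (φ S.one) (S.sharp (φ a)))
    (a b : J) :
    S.N (φ a) = S.N (φ S.one) * σ (S.N a) ∧
    σ (S.T (Function.invFun φ (S.U (φ S.one) a)) b) = S.T a (φ b) := by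

  have h2K : IsUnit (2:K) := by
    have h : (2:K) = algebraMap F K 2 := by rw [map_ofNat]
    exact h ▸ (IsUnit.map (algebraMap F K) (isUnit_iff_ne_zero.mpr h2))
  have h3K : IsUnit (3:K) := by
    have h : (3:K) = algebraMap F K 3 := by rw [map_ofNat]
    exact h ▸ (IsUnit.map (algebraMap F K) (isUnit_iff_ne_zero.mpr h3))
  obtain ⟨z, hz⟩ : ∃ z, z = φ S.one := ⟨_, rfl⟩
  rw [← hz] at hinv haut ⊢
  obtain ⟨δ, hδ⟩ : ∃ d, d = S.N z := ⟨_, rfl⟩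
  rw [← hδ] at hinv haut ⊢
  have cancel2 : ∀ x y : K, (2:K) * x = 2 * y → x = y := fun x y h => h2K.mul_left_cancel h
  have cancel3 : ∀ x y : K, (3:K) * x = 3 * y → x = y := fun x y h => h3K.mul_left_cancel h
  have cancelδ : ∀ x y : K, δ * x = δ * y → x = y := fun x y h => hinv.mul_left_cancel h
  -- basic φ facts
  have hφsub : ∀ p q : J, φ (p - q) = φ p - φ q := by
    intro p q
    have h := hadd (p - q) q
    rw [sub_add_cancel] at h
    rw [h]; abel
  -- exact autotopy identity
  have haut' : ∀ x : J, δ • φ (S.sharp x) = S.U z (S.sharp (φ x)) := by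
    intro x
    rw [haut x, smul_smul, Ring.mul_inverse_cancel δ hinv, one_smul]
  have hUdef : ∀ v c : J, S.U v c = S.T v c • v - S.cross (S.sharp v) c := fun _ _ => rfl
  -- trace of U
  have hTU : ∀ c w : J, S.T w (S.U z c)
      = S.T z c * S.T z w - S.T c (S.cross (S.sharp z) w) := by
    intro c w
    rw [hUdef, S.T_sub_right, S.T_smul_right, S.T_symm w z,
      S.tc_swap w (S.sharp z) c, S.cross_comm w (S.sharp z)]
  have hTz3 : S.T z (S.sharp z) = 3 * δ := by rw [hδ]; exact S.t_sharp_self h2K z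
  have hPsz : ∀ c : J, S.T c (S.cross (S.sharp z) (S.sharp z)) = 2 * (δ * S.T c z) := by
    intro c
    rw [S.tc_sharp, S.sharp_sharp, S.T_smul_right, ← hδ]
  -- (A) : trace form of φ(x×y) = δ⁻¹ U_z(φx × φy)
  have hA : ∀ x y w : J, δ * S.T w (φ (S.cross x y))
      = S.T w (S.U z (S.cross (φ x) (φ y))) := by
    intro x y w
    have e1 : δ • φ (S.cross x y)
        = S.U z (S.sharp (φ x + φ y)) - S.U z (S.sharp (φ x)) - S.U z (S.sharp (φ y)) := by
      rw [show S.cross x y = S.sharp (x + y) - S.sharp x - S.sharp y from rfl,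
        hφsub, hφsub, smul_sub, smul_sub, haut', haut', haut', hadd]
    have e2 : S.T w (δ • φ (S.cross x y))
        = S.T w (S.U z (S.sharp (φ x + φ y))) - S.T w (S.U z (S.sharp (φ x)))
          - S.T w (S.U z (S.sharp (φ y))) := by
      rw [e1, S.T_sub_right, S.T_sub_right]
    rw [S.T_smul_right] at e2
    rw [e2, hTU, hTU, hTU, hTU, S.sharp_add (φ x) (φ y), S.T_add_right, S.T_add_right,
      S.T_add_left, S.T_add_left]
    ring
  -- (G)
  have hG : ∀ x : J, S.T (φ x) (S.sharp z) = δ * σ (S.T x S.one) := by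
    intro x
    have hc1 : S.cross S.one x = S.T x S.one • S.one - x := by
      have h := S.one_cross x
      rw [show S.sharp (S.one + x) - S.sharp S.one - S.sharp x = S.cross S.one x from rfl] at h
      nth_rewrite 3 [h]
      abel
    have e1 : φ (S.cross x S.one) = σ (S.T x S.one) • z - φ x := by
      rw [S.cross_comm x S.one, hc1, hφsub, hsemi, ← hz]
    have e2 := hA x S.one (S.sharp z)
    rw [← hz] at e2
    rw [e1, S.T_sub_right, S.T_smul_right] at e2
    rw [hTU, hTz3, hPsz, S.T_symm (S.cross (φ x) z) z, S.phi_cyclic (φ x) z z,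
      S.tc_sharp, S.T_symm (S.sharp z) z, hTz3, S.T_symm (S.sharp z) (φ x)] at e2
    have e3 : (3:K) * (δ * S.T (φ x) (S.sharp z)) = 3 * (δ * (δ * σ (S.T x S.one))) := by
      linear_combination -e2
    exact cancelδ _ _ (cancel3 _ _ e3)
  have hUsz : ∀ c : J, S.T (S.sharp z) (S.U z c) = δ * S.T z c := by
    intro c
    rw [hTU c (S.sharp z), hTz3, hPsz c]
    linear_combination (2 * δ) * (S.T_symm z c)
  -- T(z, φx × φy)
  have hzc : ∀ x y : J, S.T z (S.cross (φ x) (φ y)) = δ * σ (S.T S.one (S.cross x y)) := by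
    intro x y
    have e := hA x y (S.sharp z)
    rw [hUsz] at e
    rw [S.T_symm (S.sharp z) (φ (S.cross x y)), hG (S.cross x y)] at e
    rw [S.T_symm S.one (S.cross x y)]
    exact (cancelδ _ _ e).symm
  -- (W1)
  have hW1 : ∀ y : J, S.T z (S.sharp (φ y)) = δ * σ (S.T (S.sharp y) S.one) := by
    intro y
    have e : S.T (S.sharp z) (δ • φ (S.sharp y)) = S.T (S.sharp z) (S.U z (S.sharp (φ y))) := by
      rw [haut' y]
    rw [S.T_smul_right, hUsz, S.T_symm (S.sharp z) (φ (S.sharp y)), hG (S.sharp y)] at e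
    exact (cancelδ _ _ e).symm
  -- L1 at z♯ (scalar form)
  have hL1bz : ∀ c u : J, S.T u (S.cross z (S.cross (S.sharp z) c))
      = δ * S.T c u + S.T c z * S.T (S.sharp z) u := by
    intro c u
    have e := S.l1s h2K h3K (S.sharp z) c u
    rw [S.sharp_sharp z, S.n_sharp h2K h3K z, S.tc_smul_left, S.T_smul_right, ← hδ] at e
    exact cancelδ _ _ (by linear_combination e)
  -- (H)
  have hH : ∀ y u : J, S.T (S.sharp (φ y)) u
      = σ (S.T (S.sharp y) S.one) * S.T (S.sharp z) u - S.T u (S.cross z (φ (S.sharp y))) := by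
    intro y u
    have e0 : S.cross (S.sharp z) (S.sharp (φ y))
        = S.T z (S.sharp (φ y)) • z - δ • φ (S.sharp y) := by
      have h := haut' y
      rw [hUdef] at h
      rw [h]; abel
    have e1 : S.T u (S.cross z (S.cross (S.sharp z) (S.sharp (φ y))))
        = S.T u (S.cross z (S.T z (S.sharp (φ y)) • z - δ • φ (S.sharp y))) := by rw [e0]
    rw [S.tc_sub_right, S.tc_smul_right, S.tc_smul_right, hL1bz (S.sharp (φ y)) u,
      S.tc_sharp u z, S.T_symm (S.sharp (φ y)) z, hW1 y, S.T_symm u (S.sharp z)] at e1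
    exact cancelδ _ _ (by linear_combination e1)
  -- (★)
  have hStar : ∀ x y : J, S.T (φ x) (S.sharp (φ y)) = δ * σ (S.T x (S.sharp y)) := by
    intro x y
    rw [S.T_symm (φ x) (S.sharp (φ y)), hH y (φ x), S.T_symm (S.sharp z) (φ x), hG x,
      S.phi_cyclic z (φ (S.sharp y)) (φ x), hzc (S.sharp y) x,
      S.t_decomp x (S.sharp y), map_sub, map_mul, S.cross_comm (S.sharp y) x]
    ring
  -- part (i)
  have hi : ∀ w : J, S.N (φ w) = δ * σ (S.N w) := by
    intro w
    have e := hStar w w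
    rw [S.t_sharp_self h2K (φ w), S.t_sharp_self h2K w, map_mul, map_ofNat] at e
    exact cancel3 _ _ (by linear_combination e)
  -- trace of U_{z♯}
  have hTUs : ∀ q w : J, S.T w (S.U (S.sharp z) q)
      = S.T (S.sharp z) q * S.T (S.sharp z) w - δ * S.T w (S.cross z q) := by
    intro q w
    rw [hUdef, S.T_sub_right, S.T_smul_right, S.T_symm w (S.sharp z), S.sharp_sharp z,
      S.tc_smul_left, ← hδ]
  -- U_{z♯} ∘ U_z = δ² (trace form)
  have hL2s : ∀ p w : J, S.T w (S.U (S.sharp z) (S.U z p)) = δ^2 * S.T p w := by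
    intro p w
    rw [hTUs, hUsz]
    have e : S.T w (S.cross z (S.U z p))
        = S.T z p * (2 * S.T w (S.sharp z)) - (δ * S.T p w + S.T p z * S.T (S.sharp z) w) := by
      rw [hUdef, S.tc_sub_right, S.tc_smul_right, S.tc_sharp w z, hL1bz p w]
    rw [e, S.T_symm w (S.sharp z)]
    linear_combination (δ * S.T (S.sharp z) w) * (S.T_symm p z)
  -- U_{z♯} is self-adjoint
  have hUszAdj : ∀ w q : J, S.T w (S.U (S.sharp z) q) = S.T q (S.U (S.sharp z) w) := by
    intro w q
    rw [hTUs, hTUs, S.phi_cyclic z q w, S.phi_cyclic z w q, S.cross_comm w q]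
    ring
  -- (★★)
  have hStarStar : ∀ p q : J, S.T (φ q) (S.U (S.sharp z) (φ p)) = δ^2 * σ (S.T q p) := by
    intro p q
    rw [hTUs (φ p) (φ q), S.T_symm (S.sharp z) (φ p), hG p, S.T_symm (S.sharp z) (φ q), hG q,
      S.phi_cyclic z (φ p) (φ q), hzc p q, S.t_decomp q p, map_sub, map_mul,
      S.cross_comm p q]
    ring
  refine ⟨hi a, ?_⟩
  -- part (ii)
  have hc : φ (Function.invFun φ (S.U z a)) = S.U z a :=
    Function.rightInverse_invFun hbij.surjective _
  have e := hStarStar b (Function.invFun φ (S.U z a))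
  rw [hUszAdj (φ (Function.invFun φ (S.U z a))) (φ b), hc, hL2s a (φ b)] at e
  exact ((hinv.pow 2).mul_left_cancel e).symm
end

section
/- If T is nondegenerate (i.e., T(b, c) = 0 for all c ∈ J implies b = 0), then the algebra A is simple: every F-subspace I ⊆ A satisfying A·I ⊆ I, I·A ⊆ I, and Ī = I is equal to 0 or to A. -/
section AAlgebra

variable {K : Type*} [CommRing K] {J : Type*} [AddCommGroup J] [Module K J]

/-- The multiplication of the algebra `A = K ⊕ J` of Theorem 3.3:
`(s,b)(t,c) = (st + T(b, φ(c)), s•c + σ(t)•b + γ•(φ(b) × φ(c)))`. -/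
def Amul (S : CubicNormStructure K J) (σ : K → K) (φ : J → J) (γ : K)
    (x y : K × J) : K × J :=
  (x.1 * y.1 + S.T x.2 (φ y.2),
    x.1 • y.2 + σ y.1 • x.2 + γ • S.cross (φ x.2) (φ y.2))

/-- The involution of `A = K ⊕ J`: `(s,b)‾ = (σ(s), b)`. -/
def Abar (σ : K → K) (x : K × J) : K × J := (σ x.1, x.2)

end AAlgebra

/-- The operator `V_{x,y}(z) = (x·ȳ)·z + (z·ȳ)·x − (z·x̄)·y`. -/
def AV {A : Type*} [AddCommGroup A] (mul : A → A → A) (bar : A → A)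
    (x y z : A) : A :=
  mul (mul x (bar y)) z + mul (mul z (bar y)) x - mul (mul z (bar x)) y

/-- `A`, equipped with the bilinear multiplication `mul`, unit `one` and
`F`-linear involution `bar`, is a structurable `F`-algebra: `bar` is an additive,
`F`-linear involution with `(xy)‾ = ȳ x̄`, `mul` is `F`-bilinear with unit `one`,
and the structurable identity `[V_{x,y}, V_{z,w}] = V_{V_{x,y}z, w} − V_{z, V_{y,x}w}`
holds (stated pointwise). -/
def IsStructurable (F : Type*) [Field F] {A : Type*} [AddCommGroup A] [Module F A]
    (mul : A → A → A) (bar : A → A) (one : A) : Prop :=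
  (∀ x y, bar (x + y) = bar x + bar y) ∧
  (∀ (c : F) (x), bar (c • x) = c • bar x) ∧
  (∀ x, bar (bar x) = x) ∧
  (∀ x y, bar (mul x y) = mul (bar y) (bar x)) ∧
  (∀ x y z, mul (x + y) z = mul x z + mul y z) ∧
  (∀ x y z, mul x (y + z) = mul x y + mul x z) ∧
  (∀ (c : F) (x y), mul (c • x) y = c • mul x y) ∧
  (∀ (c : F) (x y), mul x (c • y) = c • mul x y) ∧
  (∀ x, mul one x = x ∧ mul x one = x) ∧
  (∀ x y z w v,
    AV mul bar x y (AV mul bar z w v) - AV mul bar z w (AV mul bar x y v) =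
    AV mul bar (AV mul bar x y z) w v - AV mul bar z (AV mul bar y x w) v)

/-- The skew elements of `(A, bar)` form a one-dimensional `F`-subspace. -/
def SkewDimOne (F : Type*) [Field F] {A : Type*} [AddCommGroup A] [Module F A]
    (bar : A → A) : Prop :=
  ∃ s₀ : A, bar s₀ = -s₀ ∧ s₀ ≠ 0 ∧ ∀ x, bar x = -x → ∃ c : F, x = c • s₀

/-- If `T` is nondegenerate, then the structurable algebra `A = K ⊕ J` is simple:
every `F`-subspace `I` with `A·I ⊆ I`, `I·A ⊆ I` and `Ī = I` is `0` or `A`. -/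
theorem stmt11 {F : Type*} [Field F] (h2 : (2 : F) ≠ 0) (h3 : (3 : F) ≠ 0)
    {K : Type*} [CommRing K] [Algebra F K]
    (hdim : Module.finrank F K = 2)
    (hred : ∀ t : K, t * t = 0 → t = 0)
    (σ : K ≃ₐ[F] K)
    (hσσ : ∀ t : K, σ (σ t) = t)
    (hfix : ∀ t : K, σ t = t ↔ ∃ c : F, t = algebraMap F K c)
    {J : Type*} [AddCommGroup J] [Module K J] [Module F J] [IsScalarTower F K J]
    (S : CubicNormStructure K J)
    (φ : J → J)
    (hbij : Function.Bijective φ)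
    (hadd : ∀ a b : J, φ (a + b) = φ a + φ b)
    (hsemi : ∀ (t : K) (a : J), φ (t • a) = σ t • φ a)
    (hinv : IsUnit (S.N (φ S.one)))
    (haut : ∀ a : J, φ (S.sharp a) =
      Ring.inverse (S.N (φ S.one)) • S.U (φ S.one) (S.sharp (φ a)))
    (hself : ∀ b : J, φ (φ b) = S.U (φ S.one) b)
    (γ : K) (hγ : γ * σ γ = Ring.inverse (S.N (φ S.one)))
    (hT : ∀ b : J, (∀ c : J, S.T b c = 0) → b = 0)
    (I : Submodule F (K × J))
    (hIl : ∀ x ∈ I, ∀ y : K × J, Amul S (⇑σ) φ γ y x ∈ I)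
    (hIr : ∀ x ∈ I, ∀ y : K × J, Amul S (⇑σ) φ γ x y ∈ I)
    (hIbar : ∀ x ∈ I, Abar (⇑σ) x ∈ I) :
    I = ⊥ ∨ I = ⊤ := by
  classical
  have hφ0 : φ 0 = 0 := by
    have h := hadd 0 0
    rw [add_zero] at h
    exact left_eq_add.mp h
  have hsharp0 : S.sharp 0 = 0 := by
    have h := S.sharp_smul 0 0
    simpa using h
  have hcross0r : ∀ a : J, S.cross a 0 = 0 := by
    intro a; simp [CubicNormStructure.cross, hsharp0]
  have hcross0l : ∀ a : J, S.cross 0 a = 0 := by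
    intro a; simp [CubicNormStructure.cross, hsharp0]
  have hT0l : ∀ c : J, S.T 0 c = 0 := by
    intro c
    have h := S.T_smul_left 0 c c
    simpa using h
  have hT0r : ∀ c : J, S.T c 0 = 0 := by
    intro c; rw [S.T_symm]; exact hT0l c
  have hσ1 : σ (1 : K) = 1 := map_one σ
  have hLmul : ∀ (t s : K) (b : J),
      Amul S (⇑σ) φ γ (t, 0) (s, b) = (t * s, t • b) := by
    intro t s b
    simp [Amul, hφ0, hT0l, hcross0l]
  have hRmul : ∀ (s : K) (b : J) (t : K),
      Amul S (⇑σ) φ γ (s, b) (t, (0 : J)) = (s * t, σ t • b) := by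
    intro s b t
    simp [Amul, hφ0, hT0r, hcross0r]
  -- If I contains a nonzero element of K × 0, then I = ⊤.
  have hK : ∀ u : K, u ≠ 0 → ((u, (0 : J)) ∈ I) → I = ⊤ := by
    intro u hu huI
    have hmulu : ∀ t : K, ((t * u, (0 : J)) ∈ I) := by
      intro t
      have h := hIl (u, 0) huI (t, 0)
      rw [hLmul] at h
      simpa using h
    have hone : ((1 : K), (0 : J)) ∈ I := by
      have hnfix : σ (u * σ u) = u * σ u := by rw [map_mul, hσσ, mul_comm]
      obtain ⟨c, hc⟩ := (hfix _).mp hnfix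
      by_cases hc0 : c = 0
      · have hn0 : u * σ u = 0 := by rw [hc, hc0, map_zero]
        have htrfix : σ (u + σ u) = u + σ u := by rw [map_add, hσσ, add_comm]
        obtain ⟨a, ha⟩ := (hfix _).mp htrfix
        by_cases ha0 : a = 0
        · exfalso
          have h' : u + σ u = 0 := by rw [ha, ha0, map_zero]
          have huu : u * u = 0 := by linear_combination u * h' - hn0
          exact hu (hred u huu)
        · have he : ((algebraMap F K a⁻¹ * u, (0 : J)) ∈ I) := hmulu _
          have hσe : ((σ (algebraMap F K a⁻¹ * u), (0 : J)) ∈ I) := by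
            simpa [Abar] using hIbar _ he
          have hsum := I.add_mem he hσe
          have h1 : (algebraMap F K a⁻¹ * u) + σ (algebraMap F K a⁻¹ * u) = 1 := by
            rw [map_mul, AlgEquiv.commutes]
            have heq : algebraMap F K a⁻¹ * u + algebraMap F K a⁻¹ * σ u
                = algebraMap F K a⁻¹ * (u + σ u) := by ring
            rw [heq, ha, ← map_mul, inv_mul_cancel₀ ha0, map_one]
          rw [Prod.mk_add_mk, h1, add_zero] at hsum
          exact hsum
      · have h1 : (algebraMap F K c⁻¹ * σ u) * u = 1 := by
          have heq : (algebraMap F K c⁻¹ * σ u) * u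
              = algebraMap F K c⁻¹ * (u * σ u) := by ring
          rw [heq, hc, ← map_mul, inv_mul_cancel₀ hc0, map_one]
        have h := hmulu (algebraMap F K c⁻¹ * σ u)
        rwa [h1] at h
    apply Submodule.eq_top_iff'.mpr
    intro x
    have h := hIl (1, 0) hone x
    have hx : Amul S (⇑σ) φ γ x (1, 0) = x := by
      obtain ⟨t, c⟩ := x
      simp [Amul, hφ0, hT0r, hcross0r, hσ1]
    rwa [hx] at h
  -- σ is not the identity
  have hexσ : ∃ t : K, σ t ≠ t := by
    by_contra h
    push_neg at h
    have hsurj : Function.Surjective (Algebra.linearMap F K) := by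
      intro t
      obtain ⟨c, hc⟩ := (hfix t).mp (h t)
      exact ⟨c, hc.symm⟩
    have hle : Module.finrank F K ≤ 1 := by
      calc Module.finrank F K
          = Module.finrank F (⊤ : Submodule F K) := (finrank_top F K).symm
        _ = Module.finrank F (LinearMap.range (Algebra.linearMap F K)) := by
            rw [LinearMap.range_eq_top.mpr hsurj]
        _ ≤ Module.finrank F F := LinearMap.finrank_range_le _
        _ = 1 := Module.finrank_self F
    rw [hdim] at hle
    omega
  by_cases hbot : I = ⊥
  · exact Or.inl hbot
  right
  obtain ⟨⟨s, b⟩, hxI, hx0⟩ := (Submodule.ne_bot_iff I).mp hbot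
  by_cases hb : b = 0
  · subst hb
    have hs : s ≠ 0 := fun h => hx0 (by simp [h])
    exact hK s hs hxI
  · obtain ⟨t₀, ht₀⟩ := hexσ
    have hL := hIl (s, b) hxI (t₀, 0)
    rw [hLmul] at hL
    have hR := hIr (s, b) hxI (t₀, 0)
    rw [hRmul] at hR
    have hsub := I.sub_mem hL hR
    have heq : ((t₀ * s, t₀ • b) - (s * t₀, σ t₀ • b) : K × J)
        = (0, (t₀ - σ t₀) • b) := by
      simp [Prod.mk_sub_mk, mul_comm, sub_smul]
    rw [heq] at hsub
    set ι := t₀ - σ t₀ with hι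
    have hιne : ι ≠ 0 := sub_ne_zero.mpr (fun h => ht₀ h.symm)
    have hσι : σ ι = -ι := by rw [hι, map_sub, hσσ]; ring
    have hι2fix : σ (ι * ι) = ι * ι := by rw [map_mul, hσι]; ring
    obtain ⟨c, hc⟩ := (hfix _).mp hι2fix
    have hc0 : c ≠ 0 := by
      intro h
      exact hιne (hred ι (by rw [hc, h, map_zero]))
    have hb' : ((0 : K), b) ∈ I := by
      have h := hIl _ hsub (algebraMap F K c⁻¹ * ι, 0)
      rw [hLmul] at h
      have hsm : (algebraMap F K c⁻¹ * ι) • (ι • b) = b := by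
        rw [smul_smul]
        have h1 : algebraMap F K c⁻¹ * ι * ι = 1 := by
          rw [mul_assoc, hc, ← map_mul, inv_mul_cancel₀ hc0, map_one]
        rw [h1, one_smul]
      rw [hsm] at h
      simpa using h
    have hexc : ∃ c0 : J, S.T b c0 ≠ 0 := by
      by_contra h
      push_neg at h
      exact hb (hT b h)
    obtain ⟨c0, hc0T⟩ := hexc
    obtain ⟨c', hc'⟩ := hbij.2 c0
    set u := S.T b (φ c') with hu
    have hune : u ≠ 0 := by rw [hu, hc']; exact hc0T
    have hex : ∃ t : K, σ (t * u) ≠ t * u := by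
      by_contra h
      push_neg at h
      obtain ⟨cu, hcu⟩ := (hfix u).mp (by simpa using h 1)
      have hcune : cu ≠ 0 := by
        intro h'
        exact hune (by rw [hcu, h', map_zero])
      apply ht₀
      apply (hfix t₀).mpr
      obtain ⟨d, hd⟩ := (hfix _).mp (h t₀)
      refine ⟨d * cu⁻¹, ?_⟩
      calc t₀ = t₀ * (u * algebraMap F K cu⁻¹) := by
              rw [hcu, ← map_mul, mul_inv_cancel₀ hcune, map_one, mul_one]
        _ = (t₀ * u) * algebraMap F K cu⁻¹ := by ring
        _ = algebraMap F K d * algebraMap F K cu⁻¹ := by rw [hd]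
        _ = algebraMap F K (d * cu⁻¹) := by rw [map_mul]
    obtain ⟨t₁, ht₁⟩ := hex
    have hmem := hIr _ hb' ((0 : K), (σ t₁) • c')
    have hbar := hIbar _ hmem
    have hdiff := I.sub_mem hmem hbar
    have hKpart : S.T b (φ ((σ t₁) • c')) = t₁ * u := by
      rw [hsemi, hσσ, S.T_symm, S.T_smul_left, S.T_symm, hu]
    have hcalc : Amul S (⇑σ) φ γ ((0 : K), b) ((0 : K), (σ t₁) • c')
        - Abar (⇑σ) (Amul S (⇑σ) φ γ ((0 : K), b) ((0 : K), (σ t₁) • c'))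
        = (t₁ * u - σ (t₁ * u), (0 : J)) := by
      simp [Amul, Abar, Prod.mk_sub_mk, hKpart]
    rw [hcalc] at hdiff
    exact hK _ (sub_ne_zero.mpr (Ne.symm ht₁)) hdiff
end

section
/- Let φ be a σ-semilinear self-adjoint autotopy of the cubic norm structure (J, N, ♯, T, 1) over K, let δ := N(φ(1)), and let γ ∈ K satisfy γ·σ(γ) = δ⁻¹. Define N̂(a) := γ⁻¹·N(a), a^{♯̂} := γ•(φ(a))♯, and T̂(a, b) := T(a, φ(b)). Then (J, N̂, ♯̂, T̂) is a hermitian cubic norm structure over K/F; that is, T̂ is hermitian (T̂(s•a, t•b) = s·σ(t)·T̂(a,b) and σ(T̂(a,b)) = T̂(b,a)), and for all t ∈ K, a, b ∈ J: (t•a)^{♯̂} = σ(t)²•a^{♯̂}, N̂(t•a) = t³·N̂(a), N̂(a+b) = N̂(a) + T̂(b, a^{♯̂}) + T̂(a, b^{♯̂}) + N̂(b), and (a^{♯̂})^{♯̂} = N̂(a)•a. -/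
/-- A hermitian (non-unital) cubic norm structure over `K/F`, with respect to
the conjugation `σ` of `K`. -/
structure HermCubicNormStructure (K : Type*) [CommRing K] (σ : K → K)
    (J : Type*) [AddCommGroup J] [Module K J] where
  N : J → K
  sharp : J → J
  T : J → J → K
  N_ne_zero : N ≠ 0
  T_add_left : ∀ a b c : J, T (a + b) c = T a c + T b c
  T_add_right : ∀ a b c : J, T a (b + c) = T a b + T a c
  T_smul : ∀ (s t : K) (a b : J), T (s • a) (t • b) = s * σ t * T a b
  T_conj : ∀ a b : J, σ (T a b) = T b a
  sharp_smul : ∀ (t : K) (a : J), sharp (t • a) = (σ t) ^ 2 • sharp a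
  N_smul : ∀ (t : K) (a : J), N (t • a) = t ^ 3 * N a
  N_add : ∀ a b : J, N (a + b) = N a + T b (sharp a) + T a (sharp b) + N b
  sharp_sharp : ∀ a : J, sharp (sharp a) = N a • a

namespace HermCubicNormStructure

variable {K : Type*} [CommRing K] {σ : K → K}
  {J : Type*} [AddCommGroup J] [Module K J]

/-- The (σ-semilinear) linearization `a × b` of the adjoint map. -/
def cross (H : HermCubicNormStructure K σ J) (a b : J) : J :=
  H.sharp (a + b) - H.sharp a - H.sharp b

/-- The `U`-operator `U_a(b) = T(a,b)•a − a♯ × b`. -/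
def U (H : HermCubicNormStructure K σ J) (a b : J) : J :=
  H.T a b • a - H.cross (H.sharp a) b

end HermCubicNormStructure

section CNSAux

variable {K : Type*} [CommRing K] {J : Type*} [AddCommGroup J] [Module K J]
  (S : CubicNormStructure K J)

lemma cns_T_add_right (a b c : J) : S.T a (b + c) = S.T a b + S.T a c := by
  rw [S.T_symm a (b + c), S.T_add_left, S.T_symm b a, S.T_symm c a]

lemma cns_T_smul_right (t : K) (a b : J) : S.T a (t • b) = t * S.T a b := by
  rw [S.T_symm a (t • b), S.T_smul_left, S.T_symm b a]

lemma cns_T_sub_right (a b c : J) : S.T a (b - c) = S.T a b - S.T a c := by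
  have h := cns_T_add_right S a (b - c) c
  have h2 : b - c + c = b := by abel
  rw [h2] at h
  linear_combination -h

lemma cns_T_sub_left (a b c : J) : S.T (a - b) c = S.T a c - S.T b c := by
  rw [S.T_symm (a - b) c, cns_T_sub_right, S.T_symm c a, S.T_symm c b]

lemma cns_sharp_add (a b : J) :
    S.sharp (a + b) = S.cross a b + S.sharp a + S.sharp b := by
  show S.sharp (a + b) = (S.sharp (a + b) - S.sharp a - S.sharp b) + S.sharp a + S.sharp b
  abel

lemma cns_cross_comm (a b : J) : S.cross a b = S.cross b a := by
  show S.sharp (a + b) - S.sharp a - S.sharp b = S.sharp (b + a) - S.sharp b - S.sharp a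
  rw [add_comm a b]; abel

lemma cns_T_cross_assoc (a b c : J) :
    S.T (S.cross a b) c = S.T a (S.cross b c) := by
  have h1 := S.N_add (a + b) c
  have h2 := S.N_add a b
  have h3 := S.N_add a (b + c)
  have h4 := S.N_add b c
  rw [add_assoc, cns_sharp_add S a b, cns_T_add_right S c, cns_T_add_right S c,
      S.T_add_left a b (S.sharp c)] at h1
  rw [cns_sharp_add S b c, cns_T_add_right S a, cns_T_add_right S a,
      S.T_add_left b c (S.sharp a)] at h3
  rw [S.T_symm (S.cross a b) c]
  linear_combination h3 - h1 + h4 - h2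

lemma cns_T_U (a x y : J) : S.T (S.U a x) y = S.T x (S.U a y) := by
  show S.T (S.T a x • a - S.cross (S.sharp a) x) y
      = S.T x (S.T a y • a - S.cross (S.sharp a) y)
  rw [cns_T_sub_left, S.T_smul_left, cns_T_cross_assoc S (S.sharp a) x y,
      cns_T_sub_right, cns_T_smul_right, S.T_symm x (S.cross (S.sharp a) y),
      cns_T_cross_assoc S (S.sharp a) y x, cns_cross_comm S y x, S.T_symm x a]
  ring

lemma cns_cross_self (a : J) : S.cross a a = (2 : K) • S.sharp a := by
  have h : S.sharp (a + a) = (2 : K) ^ 2 • S.sharp a := by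
    rw [← two_smul K a, S.sharp_smul]
  show S.sharp (a + a) - S.sharp a - S.sharp a = (2 : K) • S.sharp a
  rw [h, show ((2 : K) ^ 2) = 2 + 1 + 1 by ring, add_smul, add_smul, one_smul]
  abel

lemma cns_T_sharp_self (K2 : ∀ x : K, 2 * x = 0 → x = 0) (a : J) :
    S.T a (S.sharp a) = 3 * S.N a := by
  have h := S.N_add a a
  rw [← two_smul K a, S.N_smul] at h
  have h0 : 2 * (S.T a (S.sharp a) - 3 * S.N a) = 0 := by linear_combination -h
  exact sub_eq_zero.mp (K2 _ h0)

lemma cns_cross_one (b : J) : S.cross S.one b = S.T b S.one • S.one - b := by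
  have h := S.one_cross b
  rw [eq_sub_iff_add_eq] at h
  show S.sharp (S.one + b) - S.sharp S.one - S.sharp b = S.T b S.one • S.one - b
  rw [← h]; abel

lemma cns_R8 (a b : J) :
    S.T a b = S.T a S.one * S.T b S.one - S.T (S.cross a b) S.one := by
  rw [cns_T_cross_assoc S a b S.one]
  have hcb : S.cross b S.one = S.T b S.one • S.one - b := by
    rw [cns_cross_comm, cns_cross_one]
  rw [hcb, cns_T_sub_right, cns_T_smul_right]
  ring

end CNSAux

/-- Theorem 4.6: a cubic norm structure over `K` together with a `σ`-semilinear
self-adjoint autotopy `φ` and `γ` with `γ·σ(γ) = δ⁻¹` yields a hermitian cubic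
norm structure with `N̂(a) = γ⁻¹ N(a)`, `a^♯̂ = γ•φ(a)♯`, `T̂(a,b) = T(a, φ(b))`. -/
theorem stmt15 {F : Type*} [Field F] (h2 : (2 : F) ≠ 0) (h3 : (3 : F) ≠ 0)
    {K : Type*} [CommRing K] [Algebra F K]
    (hdim : Module.finrank F K = 2)
    (hred : ∀ t : K, t * t = 0 → t = 0)
    (σ : K ≃ₐ[F] K)
    (hσσ : ∀ t : K, σ (σ t) = t)
    (hfix : ∀ t : K, σ t = t ↔ ∃ c : F, t = algebraMap F K c)
    {J : Type*} [AddCommGroup J] [Module K J]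
    (S : CubicNormStructure K J)
    (φ : J → J)
    (hbij : Function.Bijective φ)
    (hadd : ∀ a b : J, φ (a + b) = φ a + φ b)
    (hsemi : ∀ (t : K) (a : J), φ (t • a) = σ t • φ a)
    (hinv : IsUnit (S.N (φ S.one)))
    (haut : ∀ a : J, φ (S.sharp a) =
      Ring.inverse (S.N (φ S.one)) • S.U (φ S.one) (S.sharp (φ a)))
    (hself : ∀ b : J, φ (φ b) = S.U (φ S.one) b)
    (γ : K) (hγ : γ * σ γ = Ring.inverse (S.N (φ S.one))) :
    ∃ H : HermCubicNormStructure K (⇑σ) J,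
      H.N = (fun a => Ring.inverse γ * S.N a) ∧
      H.sharp = (fun a => γ • S.sharp (φ a)) ∧
      H.T = (fun a b => S.T a (φ b)) := by
  classical
  obtain ⟨ψ, hL, hR⟩ := Function.bijective_iff_has_inverse.mp hbij
  have hψφ : ∀ x, ψ (φ x) = x := fun x => hL x
  have hφψ : ∀ x, φ (ψ x) = x := fun x => hR x
  obtain ⟨z, hz⟩ : ∃ z, z = φ S.one := ⟨_, rfl⟩
  rw [← hz] at hinv haut hself hγ
  obtain ⟨δ, hδ⟩ : ∃ d, d = S.N z := ⟨_, rfl⟩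
  rw [← hδ] at hinv haut hγ
  obtain ⟨iδ, hiδ⟩ : ∃ d, d = Ring.inverse δ := ⟨_, rfl⟩
  rw [← hiδ] at haut hγ
  have hδiδ : δ * iδ = 1 := by rw [hiδ]; exact Ring.mul_inverse_cancel _ hinv
  -- scalar cancellation facts
  have K2 : ∀ x : K, 2 * x = 0 → x = 0 := by
    intro x hx
    have h' : (2 : F) • x = 0 := by rw [Algebra.smul_def, map_ofNat]; exact hx
    calc x = (2 : F)⁻¹ • ((2 : F) • x) := by
            rw [smul_smul, inv_mul_cancel₀ h2, one_smul]
      _ = 0 := by rw [h', smul_zero]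
  have K3 : ∀ x : K, 3 * x = 0 → x = 0 := by
    intro x hx
    have h' : (3 : F) • x = 0 := by rw [Algebra.smul_def, map_ofNat]; exact hx
    calc x = (3 : F)⁻¹ • ((3 : F) • x) := by
            rw [smul_smul, inv_mul_cancel₀ h3, one_smul]
      _ = 0 := by rw [h', smul_zero]
  have hone : (1 : K) ≠ 0 := by
    intro h01
    have hss : Subsingleton K := subsingleton_of_zero_eq_one h01.symm
    rw [Module.finrank_zero_of_subsingleton] at hdim
    exact two_ne_zero hdim.symm
  -- φ, ψ basics
  have hφsub : ∀ x y : J, φ (x - y) = φ x - φ y := by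
    intro x y
    have h := hadd (x - y) y
    have h2' : x - y + y = x := by abel
    rw [h2'] at h
    exact eq_sub_of_add_eq h.symm
  have hψsemi : ∀ (t : K) (x : J), ψ (t • x) = σ t • ψ x := by
    intro t x
    apply hbij.1
    rw [hφψ, hsemi, hφψ, hσσ]
  have hψz : ψ z = S.one := by rw [hz]; exact hψφ S.one
  have hψzw : ∀ w, ψ (z + w) = S.one + ψ w := by
    intro w
    apply hbij.1
    rw [hφψ, hadd, hφψ, ← hz]
  have hUsub : ∀ x y, S.U z (x - y) = S.U z x - S.U z y := by
    intro x y
    rw [← hself (x - y), ← hself x, ← hself y, hφsub, hφsub]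
  have hUsharp : ∀ y, S.U z (S.sharp y) = δ • φ (S.sharp (ψ y)) := by
    intro y
    have h := haut (ψ y)
    rw [hφψ] at h
    rw [h, smul_smul, hδiδ, one_smul]
  have hUz_sharpz : S.U z (S.sharp z) = δ • z := by
    have h := haut S.one
    rw [S.sharp_one, ← hz] at h
    have h9 : δ • z = δ • (iδ • S.U z (S.sharp z)) := by rw [← h]
    rw [h9, smul_smul, hδiδ, one_smul]
  -- key computation E2'
  have hE2' : ∀ w, S.U z (S.cross z w)
      = (δ * σ (S.T (ψ w) S.one)) • z - δ • w := by
    intro w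
    have e0 : S.U z (S.cross z w)
        = S.U z (S.sharp (z + w)) - S.U z (S.sharp z) - S.U z (S.sharp w) := by
      show S.U z (S.sharp (z + w) - S.sharp z - S.sharp w) = _
      rw [hUsub, hUsub]
    have e1 : S.U z (S.sharp (z + w)) = δ • φ (S.sharp (ψ (z + w))) := hUsharp _
    have e2 : S.sharp (ψ (z + w))
        = (S.T (ψ w) S.one • S.one - ψ w) + S.one + S.sharp (ψ w) := by
      rw [hψzw w, cns_sharp_add S S.one (ψ w), cns_cross_one S (ψ w), S.sharp_one]
    have e4 : φ (S.sharp (ψ w)) = iδ • S.U z (S.sharp w) := by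
      have h := haut (ψ w); rw [hφψ] at h; exact h
    have e5 : δ • (iδ • S.U z (S.sharp w)) = S.U z (S.sharp w) := by
      rw [smul_smul, hδiδ, one_smul]
    have e13 : δ • φ (S.sharp (ψ (z + w)))
        = (δ * σ (S.T (ψ w) S.one)) • z + δ • z - δ • w + S.U z (S.sharp w) := by
      rw [e2, hadd _ (S.sharp (ψ w)), hadd _ S.one, hφsub, hsemi, hφψ, ← hz, e4,
          smul_add, e5, smul_add, smul_sub, smul_smul]
      abel
    rw [e0, e1, e13, hUz_sharpz]
    abel
  -- the key sigma formula R4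
  have hR4 : ∀ w, S.T (S.sharp z) w = δ * σ (S.T (ψ w) S.one) := by
    intro w
    have ha : S.T (S.sharp z) (S.U z (S.cross z w)) = δ * (2 * S.T (S.sharp z) w) := by
      have h1' : S.T (S.sharp z) (S.U z (S.cross z w))
          = S.T (S.U z (S.sharp z)) (S.cross z w) :=
        (cns_T_U S z (S.sharp z) (S.cross z w)).symm
      rw [h1', hUz_sharpz, S.T_smul_left, ← cns_T_cross_assoc S z z w,
          cns_cross_self S z, S.T_smul_left]
    have hb : S.T (S.sharp z) (S.U z (S.cross z w))
        = (δ * σ (S.T (ψ w) S.one)) * (3 * δ) - δ * S.T (S.sharp z) w := by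
      rw [hE2' w, cns_T_sub_right, cns_T_smul_right, cns_T_smul_right,
          S.T_symm (S.sharp z) z, cns_T_sharp_self S K2 z, ← hδ]
    have h5 : 3 * (δ * S.T (S.sharp z) w - δ * (δ * σ (S.T (ψ w) S.one))) = 0 := by
      linear_combination hb - ha
    have h6 : δ * S.T (S.sharp z) w = δ * (δ * σ (S.T (ψ w) S.one)) :=
      sub_eq_zero.mp (K3 _ h5)
    linear_combination iδ * h6 + (δ * σ (S.T (ψ w) S.one) - S.T (S.sharp z) w) * hδiδ
  have hE2 : ∀ w, S.U z (S.cross z w) = S.T (S.sharp z) w • z - δ • w := by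
    intro w
    rw [hE2' w, ← hR4 w]
  have hσt : ∀ c, σ (S.T c S.one) = iδ * S.T (S.sharp z) (φ c) := by
    intro c
    have h := hR4 (φ c)
    rw [hψφ] at h
    linear_combination (-iδ) * h + (-(σ (S.T c S.one))) * hδiδ
  have hψU : ∀ b, ψ (S.U z b) = φ b := by
    intro b
    rw [← hself b]
    exact hψφ (φ b)
  have hσtφ : ∀ b, σ (S.T (φ b) S.one) = S.T z b := by
    intro b
    have h := hR4 (S.U z b)
    rw [hψU b] at h
    have h2' : S.T (S.sharp z) (S.U z b) = δ * S.T z b := by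
      calc S.T (S.sharp z) (S.U z b) = S.T (S.U z (S.sharp z)) b :=
            (cns_T_U S z (S.sharp z) b).symm
        _ = δ * S.T z b := by rw [hUz_sharpz, S.T_smul_left]
    have h7 : δ * σ (S.T (φ b) S.one) = δ * S.T z b := by linear_combination h2' - h
    linear_combination iδ * h7 + (S.T z b - σ (S.T (φ b) S.one)) * hδiδ
  have hφcross : ∀ a b, φ (S.cross a b) = iδ • S.U z (S.cross (φ a) (φ b)) := by
    intro a b
    show φ (S.sharp (a + b) - S.sharp a - S.sharp b) = _
    rw [hφsub, hφsub, haut, haut, haut, hadd]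
    show _ = iδ • S.U z (S.sharp (φ a + φ b) - S.sharp (φ a) - S.sharp (φ b))
    rw [hUsub, hUsub, smul_sub, smul_sub]
  have hσtcross : ∀ a b, σ (S.T (S.cross a (φ b)) S.one)
      = σ (S.T a S.one) * S.T z b - S.T (φ a) b := by
    intro a b
    rw [hσt (S.cross a (φ b)), hφcross a (φ b), hself b, cns_T_smul_right]
    have e1 : S.T (S.sharp z) (S.U z (S.cross (φ a) (S.U z b)))
        = δ * S.T z (S.cross (φ a) (S.U z b)) := by
      calc S.T (S.sharp z) (S.U z (S.cross (φ a) (S.U z b)))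
          = S.T (S.U z (S.sharp z)) (S.cross (φ a) (S.U z b)) :=
            (cns_T_U S z (S.sharp z) _).symm
        _ = δ * S.T z (S.cross (φ a) (S.U z b)) := by rw [hUz_sharpz, S.T_smul_left]
    rw [e1, ← cns_T_cross_assoc S z (φ a) (S.U z b),
        ← cns_T_U S z (S.cross z (φ a)) b, hE2 (φ a), cns_T_sub_left,
        S.T_smul_left, S.T_smul_left, hσt a]
    linear_combination (iδ * (S.T (S.sharp z) (φ a)) * (S.T z b)
      - (δ * iδ + 1) * (S.T (φ a) b)) * hδiδ
  have htconj : ∀ a b, σ (S.T a (φ b)) = S.T b (φ a) := by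
    intro a b
    rw [cns_R8 S a (φ b), map_sub, map_mul, hσtφ b, hσtcross a b,
        S.T_symm b (φ a)]
    ring
  -- gamma facts
  have hσδ1 : σ δ * σ iδ = 1 := by rw [← map_mul, hδiδ, map_one]
  have hA : γ * σ γ * δ = 1 := by rw [hγ]; linear_combination hδiδ
  have hB := congrArg (⇑σ) hA
  simp only [map_mul, map_one, hσσ] at hB
  have hγ1 : γ * (σ γ * σ δ) = 1 := by linear_combination hB
  have hγu : IsUnit γ := IsUnit.of_mul_eq_one _ hγ1
  have hγiγ : γ * Ring.inverse γ = 1 := Ring.mul_inverse_cancel _ hγu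
  have hiγ : Ring.inverse γ = σ γ * σ δ := by
    linear_combination (-(Ring.inverse γ)) * hγ1 + (σ γ * σ δ) * hγiγ
  have hBp : ∀ a, φ (S.sharp (φ a)) = σ δ • S.sharp a := by
    intro a
    have h := haut a
    have h2b := congrArg ψ h
    rw [hψφ, hψsemi, ← hself (S.sharp (φ a)), hψφ] at h2b
    rw [h2b, smul_smul, hσδ1, one_smul]
  have hφsharphat : ∀ a, φ (γ • S.sharp (φ a)) = Ring.inverse γ • S.sharp a := by
    intro a
    rw [hsemi, hBp, smul_smul, hiγ]
  -- build the hermitian structure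
  refine ⟨{ N := fun a => Ring.inverse γ * S.N a
            sharp := fun a => γ • S.sharp (φ a)
            T := fun a b => S.T a (φ b)
            N_ne_zero := ?_
            T_add_left := ?_
            T_add_right := ?_
            T_smul := ?_
            T_conj := ?_
            sharp_smul := ?_
            N_smul := ?_
            N_add := ?_
            sharp_sharp := ?_ }, rfl, rfl, rfl⟩
  · intro hN0
    have hv := congrFun hN0 z
    simp only [Pi.zero_apply] at hv
    rw [← hδ] at hv
    have h01 : (1 : K) = 0 := by
      calc (1 : K) = (γ * Ring.inverse γ) * (δ * iδ) := by rw [hγiγ, hδiδ, one_mul]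
        _ = (γ * iδ) * (Ring.inverse γ * δ) := by ring
        _ = (γ * iδ) * 0 := by rw [hv]
        _ = 0 := mul_zero _
    exact hone h01
  · intro a b c
    exact S.T_add_left a b (φ c)
  · intro a b c
    show S.T a (φ (b + c)) = S.T a (φ b) + S.T a (φ c)
    rw [hadd, cns_T_add_right]
  · intro s t a b
    show S.T (s • a) (φ (t • b)) = s * σ t * S.T a (φ b)
    rw [hsemi, S.T_smul_left, cns_T_smul_right]
    ring
  · intro a b
    exact htconj a b
  · intro t a
    show γ • S.sharp (φ (t • a)) = σ t ^ 2 • (γ • S.sharp (φ a))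
    rw [hsemi, S.sharp_smul, smul_smul, smul_smul, mul_comm γ (σ t ^ 2)]
  · intro t a
    show Ring.inverse γ * S.N (t • a) = t ^ 3 * (Ring.inverse γ * S.N a)
    rw [S.N_smul]; ring
  · intro a b
    show Ring.inverse γ * S.N (a + b)
        = Ring.inverse γ * S.N a + S.T b (φ (γ • S.sharp (φ a)))
          + S.T a (φ (γ • S.sharp (φ b))) + Ring.inverse γ * S.N b
    rw [hφsharphat a, hφsharphat b, cns_T_smul_right, cns_T_smul_right, S.N_add]
    ring
  · intro a
    show γ • S.sharp (φ (γ • S.sharp (φ a))) = (Ring.inverse γ * S.N a) • a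
    rw [hφsharphat a, S.sharp_smul, S.sharp_sharp, smul_smul, smul_smul]
    have hs : γ * Ring.inverse γ ^ 2 * S.N a = Ring.inverse γ * S.N a := by
      linear_combination (Ring.inverse γ * S.N a) * hγiγ
    rw [hs]
end
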